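/- Let a > 0, R = 2/(3 + √(1+8a)), φ_N defined with b = 2 (φ₀ = 1, φ_{N+1}(t) = at²φ_N(t)/((1-t)(1-2t) - at²φ_N(t))), and for N ≥ 1 define β_N(t) = at²φ_{N-1}(t)/(1 - t - at²φ_{N-1}(t)) and ψ_N(t) = ((1-t)(1-2t) - at²φ_{N-1}(t))/(1 - t - at²φ_{N-1}(t)). Then β_N : [0,R] → [0,1) is well-defined and increasing, ψ_N : [0,R] → (0,1] is well-defined and decreasing, and ψ_N(t) = 1 - 2t(1 + β_N(t)) on [0,R]. -/

import Mathlib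

noncomputable def phiN (a b : ℝ) : ℕ → ℝ → ℝ
  | 0, _ => 1
  | N+1, t => a * t^2 * phiN a b N t / ((1 - t) * (1 - b*t) - a * t^2 * phiN a b N t)

noncomputable def betaN (a : ℝ) (N : ℕ) (t : ℝ) : ℝ :=
  a * t^2 * phiN a 2 (N-1) t / (1 - t - a * t^2 * phiN a 2 (N-1) t)

noncomputable def psiN (a : ℝ) (N : ℕ) (t : ℝ) : ℝ :=
  ((1 - t) * (1 - 2*t) - a * t^2 * phiN a 2 (N-1) t) / (1 - t - a * t^2 * phiN a 2 (N-1) t)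

lemma phiN_succ (a : ℝ) (N : ℕ) (t : ℝ) :
    phiN a 2 (N+1) t = a * t^2 * phiN a 2 N t / ((1 - t) * (1 - 2*t) - a * t^2 * phiN a 2 N t) := rfl

lemma hD1_aux {a R : ℝ} (ha : 0 < a) (hR0 : 0 < R) (hR2 : R < 1/2)
    (key : (1-R)*(1-2*R) = 2*a*R^2) {t : ℝ} (ht : t ∈ Set.Icc (0:ℝ) R) :
    a*R^2 ≤ (1-t)*(1-2*t) - a*t^2 := by
  obtain ⟨ht0, htR⟩ := ht
  nlinarith [mul_nonneg (sub_nonneg.2 htR) (show (0:ℝ) ≤ 3-2*t-2*R by linarith),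
    mul_nonneg ha.le (mul_nonneg (sub_nonneg.2 htR) (by linarith : (0:ℝ) ≤ R + t))]

lemma quad1_aux {a R : ℝ} (ha : 0 < a) (hR0 : 0 < R) (hR2 : R < 1/2)
    (key : (1-R)*(1-2*R) = 2*a*R^2) {t : ℝ} (ht : t ∈ Set.Icc (0:ℝ) R) :
    0 < 1 - t - 2*a*t^2 := by
  obtain ⟨ht0, htR⟩ := ht
  nlinarith [mul_pos hR0 (show (0:ℝ) < 1 - R by linarith),
    mul_nonneg (sub_nonneg.2 htR) (show (0:ℝ) ≤ 1 + 2*a*(R+t) by positivity)]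

lemma phi_props {a R : ℝ} (ha : 0 < a) (hR0 : 0 < R) (hR2 : R < 1/2)
    (key : (1-R)*(1-2*R) = 2*a*R^2) (N : ℕ) :
    (∀ t ∈ Set.Icc (0:ℝ) R, 0 ≤ phiN a 2 N t) ∧
    (∀ t ∈ Set.Icc (0:ℝ) R, 0 < t → 0 < phiN a 2 N t) ∧
    MonotoneOn (phiN a 2 N) (Set.Icc (0:ℝ) R) ∧
    phiN a 2 N R = 1 := by
  induction N with
  | zero =>
    refine ⟨fun t _ => by simp [phiN], fun t _ _ => by simp [phiN], ?_, by simp [phiN]⟩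
    intro t1 _ t2 _ _; simp [phiN]
  | succ N ih =>
    obtain ⟨h0, hpos, hmono, hval⟩ := ih
    have hRmem : R ∈ Set.Icc (0:ℝ) R := ⟨hR0.le, le_refl R⟩
    have hle1 : ∀ t ∈ Set.Icc (0:ℝ) R, phiN a 2 N t ≤ 1 := fun t ht => by
      have := hmono ht hRmem ht.2; rwa [hval] at this
    have hqnn : ∀ t ∈ Set.Icc (0:ℝ) R, 0 ≤ a*t^2*phiN a 2 N t := fun t ht =>
      mul_nonneg (by positivity) (h0 t ht)
    have hqle : ∀ t ∈ Set.Icc (0:ℝ) R, a*t^2*phiN a 2 N t ≤ a*t^2 := fun t ht => by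
      have := mul_le_mul_of_nonneg_left (hle1 t ht) (show (0:ℝ) ≤ a*t^2 by positivity)
      linarith [mul_one (a*t^2)]
    have hDpos : ∀ t ∈ Set.Icc (0:ℝ) R, 0 < (1-t)*(1-2*t) - a*t^2*phiN a 2 N t := fun t ht => by
      have h1 := hD1_aux ha hR0 hR2 key ht
      have h2 := hqle t ht
      nlinarith [mul_pos ha (mul_pos hR0 hR0)]
    have hqmono : ∀ t1 ∈ Set.Icc (0:ℝ) R, ∀ t2 ∈ Set.Icc (0:ℝ) R, t1 ≤ t2 →
        a*t1^2*phiN a 2 N t1 ≤ a*t2^2*phiN a 2 N t2 := by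
      intro t1 h1 t2 h2 h12
      have hp := hmono h1 h2 h12
      have hnn := h0 t1 h1
      have hsq : a*t1^2 ≤ a*t2^2 := by
        nlinarith [mul_nonneg ha.le (mul_nonneg (sub_nonneg.2 h12) (show (0:ℝ) ≤ t1 + t2 by linarith [h1.1, h2.1]))]
      exact mul_le_mul hsq hp hnn (by positivity)
    refine ⟨?_, ?_, ?_, ?_⟩
    · intro t ht
      rw [phiN_succ]
      exact div_nonneg (hqnn t ht) (hDpos t ht).le
    · intro t ht htp
      rw [phiN_succ]
      exact div_pos (mul_pos (mul_pos ha (by positivity)) (hpos t ht htp)) (hDpos t ht)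
    · intro t1 h1 t2 h2 h12
      rw [phiN_succ, phiN_succ]
      have hDanti : (1-t2)*(1-2*t2) - a*t2^2*phiN a 2 N t2 ≤ (1-t1)*(1-2*t1) - a*t1^2*phiN a 2 N t1 := by
        have := hqmono t1 h1 t2 h2 h12
        nlinarith [h1.1, h2.2]
      exact div_le_div₀ (hqnn t2 h2) (hqmono t1 h1 t2 h2 h12) (hDpos t2 h2) hDanti
    · rw [phiN_succ, hval]
      have hD : (1-R)*(1-2*R) - a*R^2*1 = a*R^2 := by rw [key]; ring
      rw [hD, mul_one]
      exact div_self (by positivity)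

theorem betaN_psiN_well_defined (a : ℝ) (ha : 0 < a)
    (R : ℝ) (hR : R = 2 / (3 + Real.sqrt (1 + 8*a))) :
    ∀ N : ℕ, 1 ≤ N →
      (∀ t ∈ Set.Icc (0:ℝ) R, 0 < 1 - t - a * t^2 * phiN a 2 (N-1) t) ∧
      (∀ t ∈ Set.Icc (0:ℝ) R, betaN a N t ∈ Set.Ico (0:ℝ) 1) ∧
      StrictMonoOn (betaN a N) (Set.Icc (0:ℝ) R) ∧
      (∀ t ∈ Set.Icc (0:ℝ) R, psiN a N t ∈ Set.Ioc (0:ℝ) 1) ∧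
      StrictAntiOn (psiN a N) (Set.Icc (0:ℝ) R) ∧
      (∀ t ∈ Set.Icc (0:ℝ) R, psiN a N t = 1 - 2*t*(1 + betaN a N t)) := by
  set s := Real.sqrt (1 + 8*a) with hs
  have hs0 : 0 ≤ s := Real.sqrt_nonneg _
  have hs2 : s^2 = 1 + 8*a := Real.sq_sqrt (by linarith)
  have hs1 : 1 < s := by nlinarith
  have hR0 : 0 < R := by rw [hR]; positivity
  have hR2 : R < 1/2 := by
    rw [hR, div_lt_iff₀ (by linarith)]; linarith
  have key : (1-R)*(1-2*R) = 2*a*R^2 := by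
    rw [hR]
    have h3 : (3:ℝ) + s ≠ 0 := by linarith
    field_simp
    nlinarith [hs2]
  intro N hN
  obtain ⟨h0, hpos, hmono, hval⟩ := phi_props ha hR0 hR2 key (N-1)
  have hRmem : R ∈ Set.Icc (0:ℝ) R := ⟨hR0.le, le_refl R⟩
  have hle1 : ∀ t ∈ Set.Icc (0:ℝ) R, phiN a 2 (N-1) t ≤ 1 := fun t ht => by
    have := hmono ht hRmem ht.2; rwa [hval] at this
  have hqle : ∀ t ∈ Set.Icc (0:ℝ) R, a*t^2*phiN a 2 (N-1) t ≤ a*t^2 := fun t ht => by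
    have := mul_le_mul_of_nonneg_left (hle1 t ht) (show (0:ℝ) ≤ a*t^2 by positivity)
    linarith [mul_one (a*t^2)]
  have hqnn : ∀ t ∈ Set.Icc (0:ℝ) R, 0 ≤ a*t^2*phiN a 2 (N-1) t := fun t ht =>
    mul_nonneg (by positivity) (h0 t ht)
  have hden : ∀ t ∈ Set.Icc (0:ℝ) R, 0 < 1 - t - a * t^2 * phiN a 2 (N-1) t := by
    intro t ht
    have h1 := quad1_aux ha hR0 hR2 key ht
    have h2 := hqle t ht
    nlinarith [sq_nonneg t]
  have hqmono : ∀ t1 ∈ Set.Icc (0:ℝ) R, ∀ t2 ∈ Set.Icc (0:ℝ) R, t1 < t2 →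
      a*t1^2*phiN a 2 (N-1) t1 < a*t2^2*phiN a 2 (N-1) t2 := by
    intro t1 h1 t2 h2 h12
    have hp := hmono h1 h2 h12.le
    have hpt2 : 0 < phiN a 2 (N-1) t2 := hpos t2 h2 (lt_of_le_of_lt h1.1 h12)
    have h1nn := h0 t1 h1
    have hsq : a*t1^2 < a*t2^2 := by
      nlinarith [mul_pos ha (mul_pos (sub_pos.2 h12) (show (0:ℝ) < t1 + t2 by linarith [h1.1]))]
    calc a*t1^2*phiN a 2 (N-1) t1 ≤ a*t1^2*phiN a 2 (N-1) t2 :=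
          mul_le_mul_of_nonneg_left hp (by positivity)
      _ < a*t2^2*phiN a 2 (N-1) t2 := mul_lt_mul_of_pos_right hsq hpt2
  have hbeta : ∀ t ∈ Set.Icc (0:ℝ) R, betaN a N t ∈ Set.Ico (0:ℝ) 1 := by
    intro t ht
    constructor
    · exact div_nonneg (hqnn t ht) (hden t ht).le
    · rw [betaN, div_lt_one (hden t ht)]
      have h1 := quad1_aux ha hR0 hR2 key ht
      have h2 := hqle t ht
      linarith
  have hbmono : StrictMonoOn (betaN a N) (Set.Icc (0:ℝ) R) := by
    intro t1 h1 t2 h2 h12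
    rw [betaN, betaN, div_lt_div_iff₀ (hden t1 h1) (hden t2 h2)]
    have hq12 := hqmono t1 h1 t2 h2 h12
    have hd2 := hden t2 h2
    have hd21 : 1 - t2 - a*t2^2*phiN a 2 (N-1) t2 ≤ 1 - t1 - a*t1^2*phiN a 2 (N-1) t1 := by
      linarith
    nlinarith [hqnn t1 h1, hden t1 h1]
  have hid : ∀ t ∈ Set.Icc (0:ℝ) R, psiN a N t = 1 - 2*t*(1 + betaN a N t) := by
    intro t ht
    rw [psiN, betaN]
    have hd := (hden t ht).ne'
    rw [div_eq_iff hd]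
    linear_combination (2*t) * (div_mul_cancel₀ (a * t^2 * phiN a 2 (N-1) t) hd)
  have hpsi : ∀ t ∈ Set.Icc (0:ℝ) R, psiN a N t ∈ Set.Ioc (0:ℝ) 1 := by
    intro t ht
    constructor
    · rw [psiN]
      refine div_pos ?_ (hden t ht)
      have h1 := hD1_aux ha hR0 hR2 key ht
      have h2 := hqle t ht
      nlinarith [mul_pos ha (mul_pos hR0 hR0)]
    · rw [psiN, div_le_one (hden t ht)]
      nlinarith [ht.1, ht.2]
  refine ⟨hden, hbeta, hbmono, hpsi, ?_, hid⟩
  intro t1 h1 t2 h2 h12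
  rw [hid t1 h1, hid t2 h2]
  have hb12 := hbmono h1 h2 h12
  have hb1 := (hbeta t1 h1).1
  nlinarith [h1.1, mul_le_mul_of_nonneg_left hb12.le h1.1]
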